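/- Let A be an n×n nonnegative irreducible matrix with μ(A) ≤ 1, let x ∈ ℝ_{≥0}^n be a nonzero vector, and set z = A* ⊗ x, where A* = I ⊕ A ⊕ A^{⊗2} ⊕ ⋯ ⊕ A^{⊗(n−1)} (entrywise maximum of max-times powers). Then every entry of z is strictly positive, and for all indices i, j one has z_i^{−1}·A_{ij}·z_j ≤ 1 (i.e., with D = diag(z_1,…,z_n), every entry of D^{−1} A D is at most 1). -/

import Mathlib

open Filter Topology

/-- Max-times product of two square nonnegative matrices. -/
noncomputable def mProd {m : Type*} [Fintype m] (A B : Matrix m m NNReal) : Matrix m m NNReal :=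
  fun i j => Finset.univ.sup fun k => A i k * B k j

/-- Max-times powers: `mPow A 0 = I`, `mPow A (k+1) = A ⊗ mPow A k`. -/
noncomputable def mPow {m : Type*} [Fintype m] [DecidableEq m] (A : Matrix m m NNReal) :
    ℕ → Matrix m m NNReal
  | 0 => 1
  | k + 1 => mProd A (mPow A k)

/-- Max-times action of a matrix on a nonnegative vector. -/
noncomputable def mVec {m : Type*} [Fintype m] (A : Matrix m m NNReal) (x : m → NNReal) :
    m → NNReal :=
  fun i => Finset.univ.sup fun k => A i k * x k

/-- Maximum circuit geometric mean of a nonnegative matrix. -/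
noncomputable def mu {m : Type*} [Fintype m] [DecidableEq m] (A : Matrix m m NNReal) : NNReal :=
  (Finset.Icc 1 (Fintype.card m)).sup fun ℓ =>
    Finset.univ.sup fun i => (mPow A ℓ i i) ^ ((ℓ : ℝ)⁻¹)

/-- A nonnegative matrix is irreducible if its weighted digraph is strongly connected. -/
def MaxIrreducible {m : Type*} [Fintype m] [DecidableEq m] (A : Matrix m m NNReal) : Prop :=
  ∀ i j, ∃ k : ℕ, 1 ≤ k ∧ 0 < mPow A k i j

lemma nnreal_mul_sup {α : Type*} (c : NNReal) (s : Finset α) (f : α → NNReal) :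
    c * s.sup f = s.sup fun a => c * f a := by
  induction s using Finset.cons_induction with
  | empty => simp
  | cons a s ha ih =>
      rw [Finset.sup_cons, Finset.sup_cons, ← ih]
      rcases le_total (f a) (s.sup f) with h | h
      · rw [sup_eq_right.2 h, sup_eq_right.2 (mul_le_mul_right h c)]
      · rw [sup_eq_left.2 h, sup_eq_left.2 (mul_le_mul_right h c)]

lemma walk_le {n : ℕ} (A : Matrix (Fin n) (Fin n) NNReal) (k : ℕ) (v : ℕ → Fin n) :
    (∏ t ∈ Finset.range k, A (v t) (v (t + 1))) ≤ mPow A k (v 0) (v k) := by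
  induction k generalizing v with
  | zero => simp [mPow, Matrix.one_apply_eq]
  | succ k ih =>
      rw [Finset.prod_range_succ']
      calc (∏ t ∈ Finset.range k, A (v (t + 1)) (v (t + 1 + 1))) * A (v 0) (v 1)
          ≤ mPow A k (v 1) (v (k + 1)) * A (v 0) (v 1) :=
            mul_le_mul_left (ih (fun t => v (t + 1))) _
        _ = A (v 0) (v 1) * mPow A k (v 1) (v (k + 1)) := mul_comm _ _
        _ ≤ mPow A (k + 1) (v 0) (v (k + 1)) := by
            simp only [mPow, mProd]
            exact Finset.le_sup (f := fun m => A (v 0) m * mPow A k m (v (k + 1)))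
              (Finset.mem_univ (v 1))

lemma exists_walk {n : ℕ} (A : Matrix (Fin n) (Fin n) NNReal) (k : ℕ) (i j : Fin n) :
    ∃ v : ℕ → Fin n, v 0 = i ∧ v (k + 1) = j ∧
      mPow A (k + 1) i j ≤ ∏ t ∈ Finset.range (k + 1), A (v t) (v (t + 1)) := by
  induction k generalizing i with
  | zero =>
      refine ⟨fun t => if t = 0 then i else j, by simp, by simp, ?_⟩
      simp only [Finset.prod_range_one]
      simp only [mPow, mProd]
      apply Finset.sup_le
      intro m _
      by_cases hm : m = j
      · subst hm; simp [Matrix.one_apply_eq]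
      · simp [mPow, Matrix.one_apply_ne hm]
  | succ k ih =>
      have hne : (Finset.univ : Finset (Fin n)).Nonempty := ⟨i, Finset.mem_univ i⟩
      obtain ⟨m, -, hm⟩ := Finset.exists_mem_eq_sup Finset.univ hne
        (fun m => A i m * mPow A (k + 1) m j)
      obtain ⟨w, hw0, hwk, hwle⟩ := ih m
      refine ⟨fun t => if t = 0 then i else w (t - 1), by simp, by simp [hwk], ?_⟩
      rw [Finset.prod_range_succ']
      simp only [Nat.add_sub_cancel, Nat.succ_ne_zero, if_false, if_true]
      have : mPow A (k + 1 + 1) i j = A i m * mPow A (k + 1) m j := hm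
      rw [this, ← hw0]
      calc A i (w 0) * mPow A (k + 1) (w 0) j
          ≤ A i (w 0) * ∏ t ∈ Finset.range (k + 1), A (w t) (w (t + 1)) := by
            rw [hw0]; exact mul_le_mul_right hwle _
        _ = (∏ t ∈ Finset.range (k + 1), A (w t) (w (t + 1))) * A i (w 0) := mul_comm _ _
        _ ≤ _ := le_of_eq (by congr 1)

lemma pow_le_star {n : ℕ} (A : Matrix (Fin n) (Fin n) NNReal) (hmu : mu A ≤ 1)
    (k : ℕ) (i j : Fin n) :
    mPow A k i j ≤ (Finset.range n).sup fun ℓ => mPow A ℓ i j := by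
  induction k using Nat.strong_induction_on with
  | _ k IH =>
  by_cases hk : k < n
  · exact Finset.le_sup (f := fun ℓ => mPow A ℓ i j) (Finset.mem_range.2 hk)
  push_neg at hk
  have hn : 0 < n := i.pos
  have hk1 : 1 ≤ k := le_trans hn hk
  obtain ⟨k', rfl⟩ : ∃ k', k = k' + 1 := ⟨k - 1, by omega⟩
  obtain ⟨v, hv0, hvk, hvle⟩ := exists_walk A k' i j
  set k := k' + 1 with hkdef
  -- pigeonhole among v 0, ..., v n
  obtain ⟨a, b, hab, hvab⟩ := Fintype.exists_ne_map_eq_of_card_lt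
    (fun t : Fin (n + 1) => v t) (by simp)
  -- wlog a < b as naturals
  obtain ⟨t1, t2, ht12, ht2n, hvv⟩ :
      ∃ t1 t2 : ℕ, t1 < t2 ∧ t2 ≤ n ∧ v t1 = v t2 := by
    rcases lt_or_gt_of_ne hab with h | h
    · exact ⟨a, b, h, Nat.lt_succ_iff.1 b.isLt, hvab⟩
    · exact ⟨b, a, h, Nat.lt_succ_iff.1 a.isLt, hvab.symm⟩
  set c := t2 - t1 with hc
  have hc1 : 1 ≤ c := by omega
  have hcn : c ≤ n := by omega
  have ht2k : t2 ≤ k := le_trans ht2n hk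
  set f : ℕ → NNReal := fun t => A (v t) (v (t + 1)) with hf
  -- cycle weight ≤ 1
  have hcycle : (∏ t ∈ Finset.Ico t1 t2, f t) ≤ 1 := by
    have h1 : (∏ t ∈ Finset.Ico t1 t2, f t)
        = ∏ t ∈ Finset.range c, A (v (t1 + t)) (v (t1 + t + 1)) := by
      rw [Finset.prod_Ico_eq_prod_range]
    have h2 : (∏ t ∈ Finset.range c, A (v (t1 + t)) (v (t1 + t + 1)))
        ≤ mPow A c (v t1) (v t1) := by
      have := walk_le A c (fun t => v (t1 + t))
      simpa [show t1 + c = t2 by omega, hvv, ← add_assoc] using this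
    have h3 : mPow A c (v t1) (v t1) ≤ 1 := by
      have hmem : c ∈ Finset.Icc 1 (Fintype.card (Fin n)) := by
        simp only [Finset.mem_Icc, Fintype.card_fin]; exact ⟨hc1, hcn⟩
      have h4 : (mPow A c (v t1) (v t1)) ^ ((c : ℝ)⁻¹) ≤ mu A := by
        rw [mu]
        exact le_trans
          (Finset.le_sup (f := fun i => (mPow A c i i) ^ ((c : ℝ)⁻¹)) (Finset.mem_univ (v t1)))
          (Finset.le_sup
            (f := fun ℓ => Finset.univ.sup fun i => (mPow A ℓ i i) ^ ((ℓ : ℝ)⁻¹)) hmem)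
      have h5 : (mPow A c (v t1) (v t1)) ^ ((c : ℝ)⁻¹) ≤ 1 := le_trans h4 hmu
      have h6 : ((mPow A c (v t1) (v t1)) ^ ((c : ℝ)⁻¹)) ^ (c : ℝ) ≤ 1 ^ (c : ℝ) :=
        NNReal.rpow_le_rpow h5 (Nat.cast_nonneg c)
      rwa [← NNReal.rpow_mul, inv_mul_cancel₀ (Nat.cast_ne_zero.2 (by omega)),
        NNReal.rpow_one, NNReal.one_rpow] at h6
    calc (∏ t ∈ Finset.Ico t1 t2, f t) ≤ mPow A c (v t1) (v t1) := h1 ▸ h2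
      _ ≤ 1 := h3
  -- the shortened walk
  set w : ℕ → Fin n := fun t => if t < t1 then v t else v (t + c) with hw
  have hw0 : w 0 = i := by
    rcases Nat.eq_zero_or_pos t1 with h0 | h0
    · have h1 : w 0 = v c := by simp [hw, Nat.not_lt.2 (by omega : t1 ≤ 0)]
      rw [h1, show c = t2 by omega, ← hvv, h0, hv0]
    · simpa [hw, h0] using hv0
  have hwk2 : w (k - c) = j := by
    have hn1 : ¬ (k - c < t1) := by omega
    simp only [hw, hn1, if_false]
    rw [show k - c + c = k by omega, hvk]
  have hsplit : (∏ t ∈ Finset.range k, f t)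
      = ((∏ t ∈ Finset.Ico 0 t1, f t) * (∏ t ∈ Finset.Ico t1 t2, f t))
        * (∏ t ∈ Finset.Ico t2 k, f t) := by
    rw [Finset.range_eq_Ico, ← Finset.prod_Ico_consecutive f (Nat.zero_le t2) ht2k,
        ← Finset.prod_Ico_consecutive f (Nat.zero_le t1) (le_of_lt ht12)]
  set g : ℕ → NNReal := fun t => A (w t) (w (t + 1)) with hg
  have hnew : (∏ t ∈ Finset.range (k - c), g t)
      = (∏ t ∈ Finset.Ico 0 t1, f t) * (∏ t ∈ Finset.Ico t2 k, f t) := by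
    have hsplit2 : (∏ t ∈ Finset.range (k - c), g t)
        = (∏ t ∈ Finset.Ico 0 t1, g t) * (∏ t ∈ Finset.Ico t1 (k - c), g t) := by
      rw [Finset.range_eq_Ico,
        ← Finset.prod_Ico_consecutive g (Nat.zero_le t1) (by omega : t1 ≤ k - c)]
    rw [hsplit2]
    congr 1
    · apply Finset.prod_congr rfl
      intro t ht
      simp only [Finset.mem_Ico] at ht
      have ht1 : t < t1 := ht.2
      simp only [hg, hf, hw]
      rw [if_pos ht1]
      by_cases h2 : t + 1 < t1
      · rw [if_pos h2]
      · have he : t + 1 = t1 := by omega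
        rw [if_neg h2, show t + 1 + c = t2 by omega, ← hvv, ← he]
    · rw [Finset.prod_Ico_eq_prod_range, Finset.prod_Ico_eq_prod_range,
          show k - c - t1 = k - t2 by omega]
      apply Finset.prod_congr rfl
      intro t ht
      simp only [hg, hf, hw]
      rw [if_neg (by omega : ¬ (t1 + t < t1)), if_neg (by omega : ¬ (t1 + t + 1 < t1)),
          show t1 + t + c = t2 + t by omega, show t1 + t + 1 + c = t2 + t + 1 by omega]
  calc mPow A k i j ≤ ∏ t ∈ Finset.range k, f t := hvle
    _ = _ := hsplit
    _ ≤ ((∏ t ∈ Finset.Ico 0 t1, f t) * 1) * (∏ t ∈ Finset.Ico t2 k, f t) :=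
        mul_le_mul_left (mul_le_mul_right hcycle _) _
    _ = (∏ t ∈ Finset.Ico 0 t1, f t) * (∏ t ∈ Finset.Ico t2 k, f t) := by rw [mul_one]
    _ = ∏ t ∈ Finset.range (k - c), g t := hnew.symm
    _ ≤ mPow A (k - c) (w 0) (w (k - c)) := walk_le A (k - c) w
    _ = mPow A (k - c) i j := by rw [hw0, hwk2]
    _ ≤ _ := IH (k - c) (by omega)

theorem stmt_8 (n : ℕ) (A : Matrix (Fin n) (Fin n) NNReal) (hA : MaxIrreducible A)
    (hmu : mu A ≤ 1) (x : Fin n → NNReal) (hx : x ≠ 0)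
    (Astar : Matrix (Fin n) (Fin n) NNReal)
    (hAstar : Astar = fun i j => (Finset.range n).sup fun ℓ => mPow A ℓ i j)
    (z : Fin n → NNReal) (hz : z = mVec Astar x) :
    (∀ i, 0 < z i) ∧ ∀ i j, (z i)⁻¹ * A i j * z j ≤ 1 := by
  obtain ⟨j0, hj0⟩ : ∃ j0, x j0 ≠ 0 := Function.ne_iff.1 hx
  have hj0' : 0 < x j0 := pos_iff_ne_zero.2 hj0
  have hps : ∀ k i j, mPow A k i j ≤ Astar i j := by
    intro k i j
    rw [hAstar]
    exact pow_le_star A hmu k i j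
  have hzpos : ∀ i, 0 < z i := by
    intro i
    obtain ⟨k, hk1, hkpos⟩ := hA i j0
    have h1 : 0 < Astar i j0 := lt_of_lt_of_le hkpos (hps k i j0)
    have h2 : Astar i j0 * x j0 ≤ z i := by
      simp only [hz, mVec]
      exact Finset.le_sup (f := fun k => Astar i k * x k) (Finset.mem_univ j0)
    exact lt_of_lt_of_le (mul_pos h1 hj0') h2
  refine ⟨hzpos, fun i j => ?_⟩
  have key : A i j * z j ≤ z i := by
    simp only [hz, mVec, nnreal_mul_sup]
    apply Finset.sup_le
    intro k _
    have h1 : A i j * Astar j k ≤ Astar i k := by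
      rw [hAstar]
      simp only [nnreal_mul_sup]
      apply Finset.sup_le
      intro ℓ hℓ
      have h2 : A i j * mPow A ℓ j k ≤ mPow A (ℓ + 1) i k := by
        simp only [mPow, mProd]
        exact Finset.le_sup (f := fun m => A i m * mPow A ℓ m k) (Finset.mem_univ j)
      exact le_trans h2 (pow_le_star A hmu (ℓ + 1) i k)
    calc A i j * (Astar j k * x k) = (A i j * Astar j k) * x k := (mul_assoc _ _ _).symm
      _ ≤ Astar i k * x k := mul_le_mul_left h1 _
      _ ≤ Finset.univ.sup fun k => Astar i k * x k :=
          Finset.le_sup (f := fun k => Astar i k * x k) (Finset.mem_univ k)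
  calc (z i)⁻¹ * A i j * z j = (z i)⁻¹ * (A i j * z j) := mul_assoc _ _ _
    _ ≤ (z i)⁻¹ * z i := mul_le_mul_right key _
    _ = 1 := inv_mul_cancel₀ (hzpos i).ne'
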